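/- Let ζ = U^a · g(U,V) ∈ ℂ[[U,V]] where g is a unit (g(0,0) ≠ 0) and a ≥ 1, and let F(Z) ∈ ℂ[[X,Y]][Z] be a monic polynomial with F(U^m, V^m, ζ) = 0 of degree n in Z, written F = Z^n + Σ_{l<n} a_l(X,Y) Z^l. If X^{n-l} divides a_l(X,Y) for all l < n (i.e., (X,Z) is equimultiple of order n), then ζ ∈ ℂ[[U,V]] with every exponent (i,j) appearing in ζ satisfying i ≥ m. -/

import Mathlib

/-- The substitution `X ↦ X^m`, `Y ↦ Y^m` on `ℂ[[X,Y]]`, characterized on coefficients. -/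
noncomputable def substPow (m : ℕ) (P : MvPowerSeries (Fin 2) ℂ) : MvPowerSeries (Fin 2) ℂ :=
  fun d => if ∀ i, m ∣ d i then
    MvPowerSeries.coeff (d.mapRange (· / m) (Nat.zero_div m)) P else 0

open MvPowerSeries Finsupp in
lemma substPow_X (m : ℕ) (hm : 1 ≤ m) :
    substPow m (MvPowerSeries.X 0) = (MvPowerSeries.X 0 : MvPowerSeries (Fin 2) ℂ) ^ m := by
  classical
  ext d
  have hL : MvPowerSeries.coeff d (substPow m (MvPowerSeries.X 0)) =
      if ∀ i, m ∣ d i then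
        MvPowerSeries.coeff (d.mapRange (· / m) (Nat.zero_div m)) (MvPowerSeries.X 0) else 0 :=
    rfl
  rw [hL, MvPowerSeries.coeff_X_pow]
  by_cases hdvd : ∀ i, m ∣ d i
  · rw [if_pos hdvd, MvPowerSeries.coeff_X]
    congr 1
    simp only [eq_iff_iff]
    constructor
    · intro h
      ext i
      have := DFunLike.congr_fun h i
      simp only [mapRange_apply] at this
      obtain ⟨c, hc⟩ := hdvd i
      rw [hc, Nat.mul_div_cancel_left c hm] at this
      rcases eq_or_ne i 0 with rfl | hi
      · simp only [single_eq_same] at this ⊢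
        rw [hc, this, mul_one]
      · simp only [single_eq_of_ne' (Ne.symm hi)] at this ⊢
        rw [hc, this, mul_zero]
    · intro h
      subst h
      ext i
      rcases eq_or_ne i 0 with rfl | hi
      · simp [mapRange_apply, Nat.div_self hm]
      · simp [mapRange_apply, single_eq_of_ne' (Ne.symm hi)]
  · rw [if_neg hdvd, if_neg]
    intro h
    subst h
    apply hdvd
    intro i
    rcases eq_or_ne i 0 with rfl | hi
    · simp
    · simp [Finsupp.single_eq_of_ne' (Ne.symm hi)]

open MvPowerSeries Finsupp in
lemma coeff_X_pow_mul' (k : ℕ) (P : MvPowerSeries (Fin 2) ℂ) (d : Fin 2 →₀ ℕ) :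
    MvPowerSeries.coeff d ((MvPowerSeries.X 0 : MvPowerSeries (Fin 2) ℂ) ^ k * P) =
      if Finsupp.single 0 k ≤ d then MvPowerSeries.coeff (d - Finsupp.single 0 k) P else 0 := by
  rw [MvPowerSeries.X_pow_eq, MvPowerSeries.coeff_monomial_mul]
  split <;> simp

/-- Let `ζ = U^a g(U,V)` with `g` a unit and `a ≥ 1`, a root of a monic polynomial
`F(Z) = Z^n + Σ_{l<n} a_l(X,Y) Z^l` over `ℂ[[X,Y]]` via `X = U^m, Y = V^m`. If
`X^{n-l} ∣ a_l` for all `l < n` (i.e. `(X,Z)` is equimultiple of order `n`), then every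
exponent `(i,j)` appearing in `ζ` satisfies `i ≥ m`. -/
theorem equimultiple_XZ_forces_exponents
    (m n a : ℕ) (hm : 1 ≤ m) (hn : 1 ≤ n) (ha : 1 ≤ a)
    (g ζ : MvPowerSeries (Fin 2) ℂ)
    (hg : MvPowerSeries.constantCoeff g ≠ 0)
    (hζ : ζ = MvPowerSeries.X 0 ^ a * g)
    (φ : MvPowerSeries (Fin 2) ℂ →+* MvPowerSeries (Fin 2) ℂ)
    (hφ : ∀ P, φ P = substPow m P)
    (F : Polynomial (MvPowerSeries (Fin 2) ℂ))
    (hFmonic : F.Monic) (hFdeg : F.natDegree = n)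
    (hroot : F.eval₂ φ ζ = 0)
    (hdiv : ∀ l, l < n → MvPowerSeries.X 0 ^ (n - l) ∣ F.coeff l) :
    ∀ d : Fin 2 →₀ ℕ, MvPowerSeries.coeff d ζ ≠ 0 → m ≤ d 0 := by
  classical
  have hφX : φ (MvPowerSeries.X 0) = (MvPowerSeries.X 0 : MvPowerSeries (Fin 2) ℂ) ^ m := by
    rw [hφ, substPow_X m hm]
  -- main claim: m ≤ a
  have hma : m ≤ a := by
    by_contra hma
    push_neg at hma  -- a < m
    set d₀ : Fin 2 →₀ ℕ := Finsupp.single 0 (a * n) with hd₀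
    have hsum : F.eval₂ φ ζ = ∑ i ∈ Finset.range (n + 1), φ (F.coeff i) * ζ ^ i := by
      rw [Polynomial.eval₂_eq_sum_range, hFdeg]
    have h0 : (0 : ℂ) = ∑ i ∈ Finset.range (n + 1),
        MvPowerSeries.coeff d₀ (φ (F.coeff i) * ζ ^ i) := by
      rw [← map_sum, ← hsum, hroot, map_zero]
    rw [Finset.sum_range_succ] at h0
    -- lower terms vanish
    have hlow : ∀ i ∈ Finset.range n, MvPowerSeries.coeff d₀ (φ (F.coeff i) * ζ ^ i) = 0 := by
      intro l hl
      rw [Finset.mem_range] at hl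
      obtain ⟨b, hb⟩ := hdiv l hl
      have : φ (F.coeff l) * ζ ^ l =
          (MvPowerSeries.X 0 : MvPowerSeries (Fin 2) ℂ) ^ (m * (n - l) + a * l) *
            (φ b * g ^ l) := by
        rw [hb, map_mul, map_pow, hφX, hζ, mul_pow, ← pow_mul, ← pow_mul, pow_add]
        ring
      rw [this, coeff_X_pow_mul', if_neg]
      rw [Finsupp.single_le_iff, hd₀, Finsupp.single_eq_same]
      have h1 : a * n < m * (n - l) + a * l := by
        have h2 : a * (n - l) < m * (n - l) :=
          Nat.mul_lt_mul_of_lt_of_le hma (le_refl _) (by omega)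
        have h3 : a * n = a * (n - l) + a * l := by
          rw [← Nat.mul_add]; congr 1; omega
        omega
      omega
    rw [Finset.sum_eq_zero hlow, zero_add] at h0
    -- top term is nonzero
    have htop : F.coeff n = 1 := by
      have := hFmonic.leadingCoeff
      rwa [Polynomial.leadingCoeff, hFdeg] at this
    rw [htop, map_one, one_mul, hζ, mul_pow, ← pow_mul, coeff_X_pow_mul', if_pos le_rfl,
      hd₀] at h0
    simp only [sub_self, tsub_self] at h0
    rw [MvPowerSeries.coeff_zero_eq_constantCoeff, map_pow] at h0
    exact pow_ne_zero n hg h0.symm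
  -- conclude
  intro d hd
  rw [hζ, coeff_X_pow_mul'] at hd
  by_cases hle : Finsupp.single (0 : Fin 2) a ≤ d
  · have := Finsupp.single_le_iff.mp hle
    omega
  · rw [if_neg hle] at hd
    exact absurd rfl hd
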